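/- Let σ be a generator of Gal(𝔽_{q^m}/𝔽_q), let n ≤ m, let β_1,…,β_n ∈ 𝔽_{q^m} be linearly independent over 𝔽_q with S = ⟨β_1,…,β_n⟩_{𝔽_q}, let a_1,…,a_t ∈ 𝔽_{q^m}^* have pairwise distinct norms N_{q^m/q}(a_i), and let 1 ≤ k ≤ nt. For each i ∈ {1,…,t} set U_i = { (y, σ(y)·N_1(a_i), σ²(y)·N_2(a_i), …, σ^{k−1}(y)·N_{k−1}(a_i)) : y ∈ S } ⊆ 𝔽_{q^m}^k. Then Σ_{i=1}^t dim_{𝔽_q}(U_i ∩ H) ≤ k − 1 for every 𝔽_{q^m}-hyperplane H of 𝔽_{q^m}^k. -/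

import Mathlib

open Matrix

/-- The dot-product functional `w ↦ ∑ j, v j * w j`. -/
noncomputable def dotL (Fqm : Type) [Field Fqm] {k : ℕ} (v : Fin k → Fqm) :
    (Fin k → Fqm) →ₗ[Fqm] Fqm where
  toFun w := ∑ j, v j * w j
  map_add' x y := by simp [mul_add, Finset.sum_add_distrib]
  map_smul' c x := by
    simp only [Pi.smul_apply, smul_eq_mul, RingHom.id_apply, Finset.mul_sum]
    exact Finset.sum_congr rfl fun j _ => by ring

/-- `v^⊥ = {w : Fqm^k | ∑ j, v j * w j = 0}` regarded as an `Fq`-subspace of `Fqm^k`. -/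
noncomputable def perpQ (Fq Fqm : Type) [Field Fq] [Field Fqm] [Algebra Fq Fqm]
    {k : ℕ} (v : Fin k → Fqm) : Submodule Fq (Fin k → Fqm) :=
  Submodule.restrictScalars Fq (LinearMap.ker (dotL Fqm v))

/-- The `Fq`-linear map `y ↦ (y, σ(y)·N₁(a), σ²(y)·N₂(a), …, σ^{k-1}(y)·N_{k-1}(a))`,
where `N_j(a) = ∏_{l<j} σ^l(a)`. -/
noncomputable def lrsMap (Fq Fqm : Type) [Field Fq] [Field Fqm] [Algebra Fq Fqm]
    (σ : Fqm ≃ₐ[Fq] Fqm) (k : ℕ) (a : Fqm) : Fqm →ₗ[Fq] (Fin k → Fqm) where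
  toFun y := fun j => (σ ^ (j : ℕ)) y * ∏ l ∈ Finset.range (j : ℕ), (σ ^ l) a
  map_add' x y := by funext j; simp [map_add, add_mul]
  map_smul' c x := by funext j; simp [_root_.map_smul, smul_mul_assoc]

set_option linter.unusedSectionVars false
set_option linter.unusedVariables false
set_option linter.unnecessarySimpa false
section LRSAux
open LinearMap Finset Module
variable {Fq Fqm : Type} [Field Fq] [Field Fqm] [Fintype Fq] [Fintype Fqm] [Algebra Fq Fqm]
variable (σ : Fqm ≃ₐ[Fq] Fqm)




/-- The evaluation operator of a skew polynomial with coefficients `c` (degree bound `d`)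
at the conjugacy point `a`. -/
noncomputable def Eop (σ : Fqm ≃ₐ[Fq] Fqm) (a : Fqm) (d : ℕ) (c : ℕ → Fqm) :
    Fqm →ₗ[Fq] Fqm where
  toFun y := ∑ j ∈ Finset.range (d + 1), c j * ((σ ^ j) y * ∏ l ∈ Finset.range j, (σ ^ l) a)
  map_add' x y := by simp [map_add, add_mul, mul_add, Finset.sum_add_distrib]
  map_smul' r x := by
    simp only [_root_.map_smul, RingHom.id_apply, Finset.smul_sum, smul_mul_assoc,
      mul_smul_comm]

/-- The operator `y ↦ a·σ(y) − α·y`. -/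
noncomputable def Tlin (σ : Fqm ≃ₐ[Fq] Fqm) (a α : Fqm) : Fqm →ₗ[Fq] Fqm where
  toFun y := a * σ y - α * y
  map_add' x y := by simp [map_add]; ring
  map_smul' r x := by
    simp only [_root_.map_smul, RingHom.id_apply, smul_sub, mul_smul_comm]

lemma Eop_apply (σ : Fqm ≃ₐ[Fq] Fqm) (a : Fqm) (d : ℕ) (c : ℕ → Fqm) (y : Fqm) :
    Eop σ a d c y
      = ∑ j ∈ Finset.range (d + 1), c j * ((σ ^ j) y * ∏ l ∈ Finset.range j, (σ ^ l) a) := rfl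

lemma Tlin_apply (σ : Fqm ≃ₐ[Fq] Fqm) (a α : Fqm) (y : Fqm) :
    Tlin σ a α y = a * σ y - α * y := rfl

/-- kernel dimension of a composition. -/
lemma finrank_ker_comp_le (f g : Fqm →ₗ[Fq] Fqm) :
    finrank Fq ↥(ker (f ∘ₗ g)) ≤ finrank Fq ↥(ker f) + finrank Fq ↥(ker g) := by
  classical
  set K := ker (f ∘ₗ g) with hK
  have hmap : ∀ x ∈ K, g x ∈ ker f := by
    intro x hx
    simpa [hK, mem_ker] using hx
  let φ : ↥K →ₗ[Fq] ↥(ker f) := g.restrict hmap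
  have hrn : finrank Fq ↥(range φ) + finrank Fq ↥(ker φ) = finrank Fq ↥K :=
    φ.finrank_range_add_finrank_ker
  have h1 : finrank Fq ↥(range φ) ≤ finrank Fq ↥(ker f) := (range φ).finrank_le
  -- inject ker φ into ker g
  let ψ : ↥(ker φ) →ₗ[Fq] ↥(ker g) :=
    { toFun := fun x => ⟨((x : ↥K) : Fqm), by
        have hx : φ (x : ↥K) = 0 := by simpa [mem_ker] using x.2
        have h0 : g ((x : ↥K) : Fqm) = 0 :=
          congrArg (fun z : ↥(ker f) => (z : Fqm)) hx
        simpa [mem_ker] using h0⟩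
      map_add' := fun x y => rfl
      map_smul' := fun r x => rfl }
  have hψ : Function.Injective ψ := by
    intro x y h
    exact Subtype.ext (Subtype.ext (congrArg (fun z : ↥(ker g) => (z : Fqm)) h))
  have h2 : finrank Fq ↥(ker φ) ≤ finrank Fq ↥(ker g) :=
    ψ.finrank_le_finrank_of_injective hψ
  omega



lemma fixed_of_sigma_fixed (hσ : ∀ τ : Fqm ≃ₐ[Fq] Fqm, τ ∈ Subgroup.zpowers σ)
    {x : Fqm} (hx : σ x = x) : ∃ c : Fq, algebraMap Fq Fqm c = x := by
  have hn : ∀ n : ℕ, (σ ^ n) x = x := by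
    intro n
    induction n with
    | zero => simp
    | succ n ih => rw [pow_succ, AlgEquiv.mul_apply, hx, ih]
  have hz : ∀ z : ℤ, (σ ^ z) x = x := by
    intro z
    obtain ⟨n, rfl | rfl⟩ := Int.eq_nat_or_neg z
    · rw [zpow_natCast]; exact hn n
    · rw [_root_.zpow_neg, zpow_natCast]
      have := hn n
      conv_lhs => rw [← this]
      exact (σ ^ n).symm_apply_apply x
  have hmem : x ∈ (⊥ : IntermediateField Fq Fqm) := by
    have hfix : x ∈ IntermediateField.fixedField (⊤ : Subgroup (Fqm ≃ₐ[Fq] Fqm)) := by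
      intro g
      obtain ⟨z, hzz⟩ := hσ (g : Fqm ≃ₐ[Fq] Fqm)
      show (g : Fqm ≃ₐ[Fq] Fqm) x = x
      rw [← hzz]
      exact hz z
    rwa [← IntermediateField.fixingSubgroup_bot (F := Fq) (E := Fqm),
      IsGalois.fixedField_fixingSubgroup (⊥ : IntermediateField Fq Fqm)] at hfix
  rwa [IntermediateField.mem_bot] at hmem

lemma sigma_pow_card (m : ℕ) (hm : Module.finrank Fq Fqm = m) : σ ^ m = 1 := by
  have hc : Fintype.card (Fqm ≃ₐ[Fq] Fqm) = m := by
    rw [← Nat.card_eq_fintype_card, IsGalois.card_aut_eq_finrank, hm]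
  rw [← hc]
  exact pow_card_eq_one

/-- Norm is invariant under σ-conjugation. -/
lemma norm_conj (m : ℕ) (hm : Module.finrank Fq Fqm = m) {y : Fqm} (hy : y ≠ 0) (a : Fqm) :
    ∏ l ∈ Finset.range m, (σ ^ l) (σ y * a * y⁻¹) = ∏ l ∈ Finset.range m, (σ ^ l) a := by
  have hP : (∏ l ∈ Finset.range m, (σ ^ l) y) ≠ 0 :=
    Finset.prod_ne_zero_iff.mpr fun l _ => by
      simpa using (map_ne_zero_iff _ (σ ^ l).injective).mpr hy
  have hshift : ∏ l ∈ Finset.range m, (σ ^ l) (σ y) = ∏ l ∈ Finset.range m, (σ ^ l) y := by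
    have h1 : ∀ l : ℕ, (σ ^ l) (σ y) = (σ ^ (l + 1)) y := fun l => by
      rw [pow_succ, AlgEquiv.mul_apply]
    have e1 := Finset.prod_range_succ (fun l => (σ ^ l) y) m
    have e2 := Finset.prod_range_succ' (fun l => (σ ^ l) y) m
    have hσm : (σ ^ m) y = y := by rw [sigma_pow_card σ m hm]; rfl
    calc ∏ l ∈ Finset.range m, (σ ^ l) (σ y)
        = ∏ l ∈ Finset.range m, (σ ^ (l + 1)) y := by
          exact Finset.prod_congr rfl fun l _ => h1 l
      _ = ∏ l ∈ Finset.range m, (σ ^ l) y := by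
          have : (∏ l ∈ Finset.range m, (σ ^ (l + 1)) y) * (σ ^ 0) y
              = (∏ l ∈ Finset.range m, (σ ^ l) y) * (σ ^ m) y := by
            rw [← e2, e1.symm] -- both equal prod over range (m+1)
          rw [hσm] at this
          simp only [pow_zero, AlgEquiv.one_apply] at this
          exact mul_right_cancel₀ hy this
  calc ∏ l ∈ Finset.range m, (σ ^ l) (σ y * a * y⁻¹)
      = (∏ l ∈ Finset.range m, (σ ^ l) (σ y)) * (∏ l ∈ Finset.range m, (σ ^ l) a)
        * (∏ l ∈ Finset.range m, (σ ^ l) y)⁻¹ := by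
        rw [← Finset.prod_mul_distrib, ← Finset.prod_inv_distrib, ← Finset.prod_mul_distrib]
        exact Finset.prod_congr rfl fun l _ => by rw [_root_.map_mul, _root_.map_mul, map_inv₀]
    _ = ∏ l ∈ Finset.range m, (σ ^ l) a := by
        rw [hshift]
        field_simp



/-- Auxiliary downward recursion for the quotient coefficients. -/
noncomputable def gseq (c : ℕ → Fqm) (α : Fqm) (d : ℕ) : ℕ → Fqm
  | 0 => c (d + 1)
  | (i + 1) => c (d - i) + gseq c α d i * (σ ^ (d - i)) α

/-- Quotient coefficients of division by `X - α`. -/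
noncomputable def gcoef (c : ℕ → Fqm) (α : Fqm) (d : ℕ) (j : ℕ) : Fqm :=
  if j ≤ d then gseq σ c α d (d - j) else 0

lemma gcoef_top (c : ℕ → Fqm) (α : Fqm) (d : ℕ) : gcoef σ c α d d = c (d + 1) := by
  simp [gcoef, gseq]

lemma gcoef_rel (c : ℕ → Fqm) (α : Fqm) (d : ℕ) {j : ℕ} (h1 : 1 ≤ j) (h2 : j ≤ d) :
    gcoef σ c α d (j - 1) = c j + gcoef σ c α d j * (σ ^ j) α := by
  have e1 : d - (j - 1) = (d - j) + 1 := by omega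
  have e2 : d - (d - j) = j := by omega
  have e3 : j - 1 ≤ d := by omega
  rw [gcoef, if_pos e3, e1, gseq, e2, gcoef, if_pos h2]

lemma gcoef_gt (c : ℕ → Fqm) (α : Fqm) (d : ℕ) {j : ℕ} (h : d < j) :
    gcoef σ c α d j = 0 := by
  rw [gcoef, if_neg (by omega)]


/-- The evaluation factorization identity: `f = g·(X - α) + r`. -/
lemma factor_eval (a α : Fqm) (c : ℕ → Fqm) (d : ℕ) (y : Fqm) :
    Eop σ a (d + 1) c y
      = Eop σ a d (gcoef σ c α d) (Tlin σ a α y)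
        + (c 0 + gcoef σ c α d 0 * α) * y := by
  set g : ℕ → Fqm := gcoef σ c α d with hg
  set N : ℕ → Fqm := fun j => ∏ l ∈ Finset.range j, (σ ^ l) a with hN
  set s : ℕ → Fqm := fun j => (σ ^ j) y * N j with hs
  have hgtop : g d = c (d + 1) := by rw [hg]; exact gcoef_top σ c α d
  have hggt : ∀ j : ℕ, d < j → g j = 0 := fun j h => by rw [hg]; exact gcoef_gt σ c α d h
  have hgrel : ∀ j : ℕ, 1 ≤ j → j ≤ d → g (j - 1) = c j + g j * (σ ^ j) α :=
    fun j h1 h2 => by rw [hg]; exact gcoef_rel σ c α d h1 h2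
  have hEc : Eop σ a (d + 1) c y = ∑ j ∈ Finset.range (d + 2), c j * s j := rfl
  -- expand the composed operator
  have hB : Eop σ a d g (Tlin σ a α y)
      = ∑ j ∈ Finset.range (d + 1),
          (g j * ((σ ^ (j + 1)) y * N (j + 1)) - (g j * (σ ^ j) α) * s j) := by
    rw [Eop_apply]
    refine Finset.sum_congr rfl fun j _ => ?_
    have h1 : (σ ^ j) (Tlin σ a α y)
        = (σ ^ j) a * (σ ^ (j + 1)) y - (σ ^ j) α * (σ ^ j) y := by
      rw [Tlin_apply, map_sub, _root_.map_mul, _root_.map_mul, pow_succ,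
        AlgEquiv.mul_apply]
    have h2 : N (j + 1) = N j * (σ ^ j) a := Finset.prod_range_succ _ _
    rw [h1, hs, h2]
    ring
  -- reindex the first sum
  have hA : ∑ j ∈ Finset.range (d + 1), g j * ((σ ^ (j + 1)) y * N (j + 1))
      = (∑ j ∈ Finset.range (d + 2), g (j - 1) * s j) - g 0 * y := by
    have e := Finset.sum_range_succ' (fun j => g (j - 1) * s j) (d + 1)
    have e0 : g (0 - 1) * s 0 = g 0 * y := by simp [hs, hN]
    rw [e0] at e
    have e' : ∑ j ∈ Finset.range (d + 2), g (j - 1) * s j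
        = (∑ j ∈ Finset.range (d + 1), g ((j + 1) - 1) * s (j + 1)) + g 0 * y := e
    rw [eq_sub_iff_add_eq, e']
    simp [hs]
  -- extend the second sum
  have hC : ∑ j ∈ Finset.range (d + 1), (g j * (σ ^ j) α) * s j
      = ∑ j ∈ Finset.range (d + 2), (g j * (σ ^ j) α) * s j := by
    rw [Finset.sum_range_succ (fun j => (g j * (σ ^ j) α) * s j) (d + 1),
      hggt (d + 1) (by omega)]
    ring
  -- the coefficient identity
  have hco : ∑ j ∈ Finset.range (d + 2), (g (j - 1) - g j * (σ ^ j) α) * s j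
      = (∑ j ∈ Finset.range (d + 2), c j * s j)
        + ((g 0 - g 0 * α) - c 0) * y := by
    have key : ∀ j ∈ Finset.range (d + 2),
        (g (j - 1) - g j * (σ ^ j) α) * s j
          = c j * s j + (if j = 0 then ((g 0 - g 0 * α) - c 0) * y else 0) := by
      intro j hj
      rcases Nat.eq_zero_or_pos j with rfl | hj1
      · have hs0 : s 0 = y := by simp [hs, hN]
        rw [if_pos rfl, hs0]
        simp only [Nat.zero_sub, pow_zero, AlgEquiv.one_apply]
        ring
      · rw [if_neg (by omega), add_zero]
        rcases Nat.lt_or_ge j (d + 1) with hlt | hge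
        · rw [hgrel j hj1 (by omega)]; ring
        · have hj2 : j = d + 1 := by
            have := Finset.mem_range.mp hj; omega
          subst hj2
          rw [show (d + 1) - 1 = d from rfl, hgtop, hggt (d + 1) (by omega)]
          ring
    rw [Finset.sum_congr rfl key, Finset.sum_add_distrib]
    congr 1
    rw [Finset.sum_ite_eq' (Finset.range (d + 2)) 0
      (fun _ => ((g 0 - g 0 * α) - c 0) * y)]
    simp
  -- put everything together
  have hcomb : (∑ j ∈ Finset.range (d + 2), g (j - 1) * s j)
      - (∑ j ∈ Finset.range (d + 2), (g j * (σ ^ j) α) * s j)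
      = ∑ j ∈ Finset.range (d + 2), (g (j - 1) - g j * (σ ^ j) α) * s j := by
    rw [← Finset.sum_sub_distrib]
    exact Finset.sum_congr rfl fun j _ => by ring
  rw [hEc, hB, Finset.sum_sub_distrib, hA, hC, sub_right_comm, hcomb, hco]
  ring



lemma finrank_ker_Tlin_le (hσ : ∀ τ : Fqm ≃ₐ[Fq] Fqm, τ ∈ Subgroup.zpowers σ)
    (a α : Fqm) (ha : a ≠ 0) : finrank Fq ↥(ker (Tlin σ a α)) ≤ 1 := by
  by_cases hbot : ker (Tlin σ a α) = ⊥
  · rw [hbot]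
    simp
  · obtain ⟨y₀, hy₀mem, hy₀⟩ := Submodule.ne_bot_iff _ |>.mp hbot
    have hle : ker (Tlin σ a α) ≤ Submodule.span Fq {y₀} := by
      intro y hy
      rcases eq_or_ne y 0 with rfl | hyne
      · exact Submodule.zero_mem _
      have h1 : a * σ y = α * y := by
        have h := mem_ker.mp hy
        rw [Tlin_apply] at h
        exact sub_eq_zero.mp h
      have h0 : a * σ y₀ = α * y₀ := by
        have h := mem_ker.mp hy₀mem
        rw [Tlin_apply] at h
        exact sub_eq_zero.mp h
      have hkey : σ y * y₀ = σ y₀ * y := by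
        apply mul_left_cancel₀ ha
        calc a * (σ y * y₀) = (a * σ y) * y₀ := by ring
          _ = (α * y) * y₀ := by rw [h1]
          _ = (a * σ y₀) * y := by rw [h0]; ring
          _ = a * (σ y₀ * y) := by ring
      have hy₀σ : σ y₀ ≠ 0 := (map_ne_zero_iff _ σ.injective).mpr hy₀
      have hfix : σ (y * y₀⁻¹) = y * y₀⁻¹ := by
        rw [_root_.map_mul, map_inv₀]
        field_simp
        linear_combination hkey
      obtain ⟨cc, hcc⟩ := fixed_of_sigma_fixed σ hσ hfix
      have hy' : y = cc • y₀ := by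
        rw [Algebra.smul_def, hcc]
        field_simp
      rw [hy']
      exact Submodule.smul_mem _ _ (Submodule.mem_span_singleton_self y₀)
    calc finrank Fq ↥(ker (Tlin σ a α)) ≤ finrank Fq ↥(Submodule.span Fq {y₀}) :=
          Submodule.finrank_mono hle
      _ = 1 := finrank_span_singleton hy₀

lemma key_bound (m : ℕ) (hm : Module.finrank Fq Fqm = m)
    (hσ : ∀ τ : Fqm ≃ₐ[Fq] Fqm, τ ∈ Subgroup.zpowers σ)
    {t : ℕ} (a : Fin t → Fqm) (ha0 : ∀ i, a i ≠ 0)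
    (hnorm : ∀ i j : Fin t,
      (∏ l ∈ Finset.range m, (σ ^ l) (a i)) = (∏ l ∈ Finset.range m, (σ ^ l) (a j)) → i = j)
    (d : ℕ) :
    ∀ (c : ℕ → Fqm), (∃ j, j ≤ d ∧ c j ≠ 0) →
      ∑ i, finrank Fq ↥(ker (Eop σ (a i) d c)) ≤ d := by
  induction d with
  | zero =>
    rintro c ⟨j, hj, hc⟩
    have hj0 : j = 0 := Nat.le_zero.mp hj
    subst hj0
    have hker : ∀ i, ker (Eop σ (a i) 0 c) = ⊥ := by
      intro i
      rw [LinearMap.ker_eq_bot']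
      intro y hy
      have : c 0 * (y * 1) = 0 := by
        rw [← hy, Eop_apply]
        simp
      simpa [hc] using this
    simp [hker]
  | succ d ih =>
    rintro c ⟨j0, hj0, hc0⟩
    by_cases hall : ∀ i, ker (Eop σ (a i) (d + 1) c) = ⊥
    · have : ∑ i, finrank Fq ↥(ker (Eop σ (a i) (d + 1) c)) = 0 := by simp [hall]
      omega
    · push_neg at hall
      obtain ⟨i₀, hi₀⟩ := hall
      obtain ⟨b, hbmem, hb0⟩ := Submodule.ne_bot_iff _ |>.mp hi₀
      set α : Fqm := σ b * (a i₀ * b⁻¹) with hα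
      have hTb : Tlin σ (a i₀) α b = 0 := by
        rw [Tlin_apply, hα]
        field_simp
        ring
      have hEb : Eop σ (a i₀) (d + 1) c b = 0 := mem_ker.mp hbmem
      have hr : c 0 + gcoef σ c α d 0 * α = 0 := by
        have hfe := factor_eval σ (a i₀) α c d b
        rw [hEb, hTb, _root_.map_zero, zero_add] at hfe
        exact (mul_eq_zero.mp hfe.symm).resolve_right hb0
      have hcomp : ∀ i, Eop σ (a i) (d + 1) c
          = (Eop σ (a i) d (gcoef σ c α d)) ∘ₗ (Tlin σ (a i) α) := by
        intro i
        apply LinearMap.ext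
        intro y
        have hfe := factor_eval σ (a i) α c d y
        rw [hr, zero_mul, add_zero] at hfe
        simpa using hfe
      have hgne : ∃ j, j ≤ d ∧ gcoef σ c α d j ≠ 0 := by
        by_contra h
        push_neg at h
        have hczero : ∀ j, j ≤ d + 1 → c j = 0 := by
          intro j hj
          rcases Nat.eq_zero_or_pos j with rfl | hj1
          · have h0 : gcoef σ c α d 0 = 0 := h 0 (Nat.zero_le d)
            have := hr
            rw [h0, zero_mul, add_zero] at this
            exact this
          · rcases Nat.lt_or_ge j (d + 1) with hlt | hge
            · have hrel := gcoef_rel σ c α d hj1 (by omega)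
              rw [h (j - 1) (by omega), h j (by omega), zero_mul, add_zero] at hrel
              exact hrel.symm
            · have hj2 : j = d + 1 := by
                omega
              subst hj2
              have htop := gcoef_top σ c α d
              rw [h d (le_refl d)] at htop
              exact htop.symm
        exact hc0 (hczero j0 hj0)
      have hbound := ih (gcoef σ c α d) hgne
      have hTker : ∀ i, i ≠ i₀ → ker (Tlin σ (a i) α) = ⊥ := by
        intro i hne
        rw [LinearMap.ker_eq_bot']
        intro y hy
        by_contra hyne
        rw [Tlin_apply] at hy
        have h1 : a i * σ y = α * y := by exact sub_eq_zero.mp hy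
        have hy' : σ y * (a i) * y⁻¹ = α := by
          field_simp
          linear_combination h1
        have hb' : σ b * (a i₀) * b⁻¹ = α := by rw [hα]; ring
        have hni : (∏ l ∈ Finset.range m, (σ ^ l) (a i))
            = ∏ l ∈ Finset.range m, (σ ^ l) (a i₀) := by
          rw [← norm_conj σ m hm hyne (a i), ← norm_conj σ m hm hb0 (a i₀), hy', hb']
        exact hne (hnorm i i₀ hni)
      have hsumT : ∑ i, finrank Fq ↥(ker (Tlin σ (a i) α)) ≤ 1 := by
        calc ∑ i, finrank Fq ↥(ker (Tlin σ (a i) α))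
            ≤ ∑ i : Fin t, (if i = i₀ then 1 else 0) := by
              refine Finset.sum_le_sum fun i _ => ?_
              by_cases h : i = i₀
              · subst h
                rw [if_pos rfl]
                exact finrank_ker_Tlin_le σ hσ (a i) α (ha0 i)
              · rw [if_neg h, hTker i h]
                simp
          _ ≤ 1 := by
              rw [Finset.sum_ite_eq' Finset.univ i₀ (fun _ => 1)]
              simp
      calc ∑ i, finrank Fq ↥(ker (Eop σ (a i) (d + 1) c))
          ≤ ∑ i, (finrank Fq ↥(ker (Eop σ (a i) d (gcoef σ c α d)))
              + finrank Fq ↥(ker (Tlin σ (a i) α))) := by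
            refine Finset.sum_le_sum fun i _ => ?_
            rw [hcomp i]
            exact finrank_ker_comp_le _ _
        _ = (∑ i, finrank Fq ↥(ker (Eop σ (a i) d (gcoef σ c α d))))
              + ∑ i, finrank Fq ↥(ker (Tlin σ (a i) α)) := Finset.sum_add_distrib
        _ ≤ d + 1 := by omega


end LRSAux

open LinearMap Finset Module in
/-- geometric MSRD property of linearized Reed–Solomon codes:
with `σ` a generator of `Gal(Fqm/Fq)`, `β` an `Fq`-independent tuple spanning `S`,
and `a i` of pairwise distinct norms, the subspaces
`U i = {(y, σ(y)N₁(a i), …, σ^{k-1}(y)N_{k-1}(a i)) : y ∈ S}` satisfy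
`∑ i dim_{Fq}(U i ∩ H) ≤ k - 1` for every hyperplane `H = v^⊥`. -/
theorem linearizedRS_hyperplane_bound
    (Fq Fqm : Type) [Field Fq] [Field Fqm] [Fintype Fq] [Fintype Fqm] [Algebra Fq Fqm]
    (m : ℕ) (hm : Module.finrank Fq Fqm = m)
    (σ : Fqm ≃ₐ[Fq] Fqm) (hσ : ∀ τ : Fqm ≃ₐ[Fq] Fqm, τ ∈ Subgroup.zpowers σ)
    (n t k : ℕ) (hnm : n ≤ m)
    (β : Fin n → Fqm) (hβ : LinearIndependent Fq β)
    (a : Fin t → Fqm) (ha0 : ∀ i, a i ≠ 0)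
    (hnorm : ∀ i j : Fin t,
      (∏ l ∈ Finset.range m, (σ ^ l) (a i)) = (∏ l ∈ Finset.range m, (σ ^ l) (a j)) → i = j)
    (hk1 : 1 ≤ k) (hkN : k ≤ n * t)
    (v : Fin k → Fqm) (hv : v ≠ 0) :
    ∑ i, Module.finrank Fq
        ↥((Submodule.span Fq (Set.range β)).map (lrsMap Fq Fqm σ k (a i)) ⊓ perpQ Fq Fqm v)
      ≤ k - 1 := by
  classical
  set c : ℕ → Fqm := fun j => if h : j < k then v ⟨j, h⟩ else 0 with hc
  have hkk : k - 1 + 1 = k := by omega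
  have hcnz : ∃ j, j ≤ k - 1 ∧ c j ≠ 0 := by
    have hvj : ∃ j : Fin k, v j ≠ 0 := by
      by_contra h
      push_neg at h
      exact hv (funext h)
    obtain ⟨j, hj⟩ := hvj
    have hlt := j.isLt
    refine ⟨j.1, by omega, ?_⟩
    rw [hc]
    simpa [dif_pos hlt, Fin.eta] using hj
  have hle : ∀ i, (Submodule.span Fq (Set.range β)).map (lrsMap Fq Fqm σ k (a i)) ⊓ perpQ Fq Fqm v
      ≤ (LinearMap.ker (Eop σ (a i) (k - 1) c)).map (lrsMap Fq Fqm σ k (a i)) := by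
    intro i w hw
    obtain ⟨hw1, hw2⟩ := hw
    obtain ⟨y, hy, rfl⟩ := Submodule.mem_map.mp hw1
    refine Submodule.mem_map.mpr ⟨y, ?_, rfl⟩
    have hdot : ∑ j : Fin k,
        v j * ((σ ^ (j : ℕ)) y * ∏ l ∈ Finset.range (j : ℕ), (σ ^ l) (a i)) = 0 := hw2
    have hmem : Eop σ (a i) (k - 1) c y = 0 := by
      rw [Eop_apply, hkk,
        ← Fin.sum_univ_eq_sum_range
          (fun j => c j * ((σ ^ j) y * ∏ l ∈ Finset.range j, (σ ^ l) (a i))) k,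
        ← hdot]
      refine Finset.sum_congr rfl fun j _ => ?_
      rw [hc]
      simp [dif_pos j.isLt, Fin.eta]
    exact LinearMap.mem_ker.mpr hmem
  calc ∑ i, finrank Fq
        ↥((Submodule.span Fq (Set.range β)).map (lrsMap Fq Fqm σ k (a i)) ⊓ perpQ Fq Fqm v)
      ≤ ∑ i, finrank Fq
          ↥((LinearMap.ker (Eop σ (a i) (k - 1) c)).map (lrsMap Fq Fqm σ k (a i))) :=
        Finset.sum_le_sum fun i _ => Submodule.finrank_mono (hle i)
    _ ≤ ∑ i, finrank Fq ↥(LinearMap.ker (Eop σ (a i) (k - 1) c)) :=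
        Finset.sum_le_sum fun i _ => Submodule.finrank_map_le _ _
    _ ≤ k - 1 := key_bound σ m hm hσ a ha0 hnorm (k - 1) c hcnz
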